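/- The group A_5 × C_3 is an Oliver group: there do not exist subgroups P ⊴ H ⊴ A_5 × C_3 such that P is a p-group for some prime p, (A_5 × C_3)/H is a q-group for some prime q, and H/P is cyclic. -/

import Mathlib

private theorem a5_not_solvable : ¬ Group.IsSolvable (alternatingGroup (Fin 5)) := by
  intro h
  have := IsSimpleGroup.comm_iff_isSolvable.mpr h
    ⟨Equiv.swap 0 1 * Equiv.swap 2 3, Equiv.Perm.mem_alternatingGroup.mpr (by decide)⟩
    ⟨Equiv.swap 0 1 * Equiv.swap 1 2, Equiv.Perm.mem_alternatingGroup.mpr (by decide)⟩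
  exact absurd (Subtype.ext_iff.mp this) (by decide)

/-- `A₅ × C₃` is an Oliver group: there is no chain `P ⊴ H ⊴ A₅ × C₃` with `P` a `p`-group,
`(A₅ × C₃)/H` a `q`-group (for primes `p`, `q`) and `H/P` cyclic. -/
theorem stmt_10 :
    ∀ (P H : Subgroup (alternatingGroup (Fin 5) × Multiplicative (ZMod 3)))
      [(P.subgroupOf H).Normal] [H.Normal],
      P ≤ H →
      ¬ ((∃ p : ℕ, p.Prime ∧ IsPGroup p P) ∧
        (∃ q : ℕ, q.Prime ∧
          IsPGroup q ((alternatingGroup (Fin 5) × Multiplicative (ZMod 3)) ⧸ H)) ∧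
        IsCyclic (H ⧸ P.subgroupOf H)) := by
  intro P H hN1 hN2 hPH h
  obtain ⟨⟨p, hp, hP⟩, ⟨q, hq, hQ⟩, hcyc⟩ := h
  haveI : Fact p.Prime := ⟨hp⟩
  haveI : Fact q.Prime := ⟨hq⟩
  -- H is solvable
  haveI hSP : Group.IsSolvable ↥(P.subgroupOf H) :=
    @IsNilpotent.to_isSolvable _ _ (hP.comap_subtype (K := H)).isNilpotent
  haveI hSQ : Group.IsSolvable (H ⧸ P.subgroupOf H) := by
    letI := hcyc.commGroup
    exact isSolvable_of_comm mul_comm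
  haveI hSH : Group.IsSolvable ↥H :=
    solvable_of_ker_le_range (P.subgroupOf H).subtype (QuotientGroup.mk' (P.subgroupOf H))
      (by rw [QuotientGroup.ker_mk', Subgroup.range_subtype])
  -- project A5 into G/H
  let g : alternatingGroup (Fin 5) →* _ :=
    (QuotientGroup.mk' H).comp (MonoidHom.inl (alternatingGroup (Fin 5)) (Multiplicative (ZMod 3)))
  rcases g.normal_ker.eq_bot_or_eq_top with hker | hker
  · have hinj : Function.Injective g := g.ker_eq_bot_iff.mp hker
    exact a5_not_solvable
      (@IsNilpotent.to_isSolvable _ _ (hQ.of_injective g hinj).isNilpotent)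
  · have hmem : ∀ a : alternatingGroup (Fin 5),
        (MonoidHom.inl (alternatingGroup (Fin 5)) (Multiplicative (ZMod 3))) a ∈ H := by
      intro a
      have : a ∈ g.ker := hker ▸ Subgroup.mem_top a
      rwa [MonoidHom.mem_ker, MonoidHom.comp_apply, ← MonoidHom.mem_ker,
        QuotientGroup.ker_mk'] at this
    have hinj : Function.Injective
        ((MonoidHom.inl (alternatingGroup (Fin 5)) (Multiplicative (ZMod 3))).codRestrict
          H hmem) := by
      intro a b hab
      have h1 := congrArg (fun x => (Subtype.val x).1) hab
      simpa using h1
    exact a5_not_solvable (solvable_of_solvable_injective hinj)
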